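/- Let C be a monoidal category, let (A, β) be a monoid object in the Drinfeld center Z(C) with multiplication μ_A : A ⊗ A → A and unit η_A : 𝟙 → A, and let (B, μ_B, η_B) be a monoid object in C. Then the object A ⊗ B of C, equipped with the multiplication (A ⊗ B) ⊗ (A ⊗ B) → A ⊗ B given (up to the associativity isomorphisms of C) by (μ_A ⊗ μ_B) ∘ (id_A ⊗ (β_B)^{-1} ⊗ id_B), where β_B : A ⊗ B ≅ B ⊗ A is the half-braiding of A at B, and with unit given (up to a unitor of C) by η_A ⊗ η_B, is a monoid object in C (i.e. this multiplication is associative and the unit axioms hold). -/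

import Mathlib

open CategoryTheory MonoidalCategory

noncomputable section

variable {C : Type*} [Category C] [MonoidalCategory C]

namespace BTAux

lemma inv_nat {A : C} (bA : HalfBraiding A) {U U' : C} (f : U ⟶ U') :
    f ▷ A ≫ (bA.β U').inv = (bA.β U).inv ≫ A ◁ f := by
  rw [← cancel_mono (bA.β U').hom]; simp

lemma inv_monoidal {A : C} (bA : HalfBraiding A) (U U' : C) :
    (bA.β (U ⊗ U')).inv =
      (α_ U U' A).hom ≫ U ◁ (bA.β U').inv ≫ (α_ U A U').inv ≫
        (bA.β U).inv ▷ U' ≫ (α_ A U U').hom := by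
  rw [← cancel_epi (bA.β (U ⊗ U')).hom, Iso.hom_inv_id, HalfBraiding.monoidal]
  simp

lemma beta_unit_hom (X : Center C) :
    (X.2.β (𝟙_ C)).hom ≫ (λ_ X.1).hom = (ρ_ X.1).hom :=
  congrArg Center.Hom.f (CategoryTheory.braiding_leftUnitor (C := Center C) X)

lemma beta_unit_inv {A : C} (bA : HalfBraiding A) :
    (bA.β (𝟙_ C)).inv = (λ_ A).hom ≫ (ρ_ A).inv := by
  rw [← cancel_epi (bA.β (𝟙_ C)).hom, Iso.hom_inv_id, ← Category.assoc,
    beta_unit_hom ⟨A, bA⟩, Iso.hom_inv_id]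

section
variable {A : C} (bA : HalfBraiding A) (B : Mon C) (ηA : 𝟙_ C ⟶ A) (μA : A ⊗ A ⟶ A)

/-- generic version of the multiplication -/
def gmul : (A ⊗ B.X) ⊗ (A ⊗ B.X) ⟶ A ⊗ B.X :=
  (α_ A B.X (A ⊗ B.X)).hom ≫
    (A ◁ (α_ B.X A B.X).inv) ≫
    (A ◁ ((bA.β B.X).inv ▷ B.X)) ≫
    (A ◁ (α_ A B.X B.X).hom) ≫
    (α_ A A (B.X ⊗ B.X)).inv ≫
    (μA ⊗ₘ (MonObj.mul (X := B.X)))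

/-- generic version of the unit -/
def gone : 𝟙_ C ⟶ A ⊗ B.X := (λ_ (𝟙_ C)).inv ≫ (ηA ⊗ₘ (MonObj.one (X := B.X)))

lemma p1 (h1 : ηA ▷ A ≫ μA = (λ_ A).hom) :
    (gone B ηA ▷ (A ⊗ B.X)) ≫ gmul bA B μA = (λ_ (A ⊗ B.X)).hom := by
  dsimp only [gone, gmul]
  calc
    _ = 𝟙 _ ⊗≫ ηA ▷ (A ⊗ B.X) ⊗≫
          A ◁ (((MonObj.one (X := B.X)) ▷ A ≫ (bA.β B.X).inv) ▷ B.X) ⊗≫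
          (μA ⊗ₘ (MonObj.mul (X := B.X))) ⊗≫ 𝟙 _ := by
        rw [tensorHom_def ηA (MonObj.one (X := B.X))]; monoidal
    _ = 𝟙 _ ⊗≫ ηA ▷ (A ⊗ B.X) ⊗≫
          ((A ⊗ A : C) ◁ ((MonObj.one (X := B.X)) ▷ B.X) ≫ μA ▷ (B.X ⊗ B.X)) ⊗≫
          A ◁ (MonObj.mul (X := B.X)) ⊗≫ 𝟙 _ := by
        rw [inv_nat bA (MonObj.one (X := B.X)), beta_unit_inv bA, tensorHom_def μA (MonObj.mul (X := B.X))]; monoidal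
    _ = 𝟙 _ ⊗≫ ηA ▷ (A ⊗ B.X) ⊗≫ μA ▷ (𝟙_ C ⊗ B.X) ⊗≫
          A ◁ ((MonObj.one (X := B.X)) ▷ B.X) ⊗≫ A ◁ (MonObj.mul (X := B.X)) ⊗≫ 𝟙 _ := by
        rw [whisker_exchange]; monoidal
    _ = 𝟙 _ ⊗≫ ((ηA ▷ A ≫ μA) ▷ B.X) ⊗≫
          (A ◁ ((MonObj.one (X := B.X)) ▷ B.X ≫ (MonObj.mul (X := B.X)))) ⊗≫ 𝟙 _ := by monoidal
    _ = (λ_ (A ⊗ B.X)).hom := by rw [h1, MonObj.one_mul B.X]; monoidal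

lemma p2 (hη : ∀ U : C, U ◁ ηA ≫ (bA.β U).inv = (ρ_ U).hom ≫ (λ_ U).inv ≫ ηA ▷ U)
    (h2 : A ◁ ηA ≫ μA = (ρ_ A).hom) :
    ((A ⊗ B.X) ◁ gone B ηA) ≫ gmul bA B μA = (ρ_ (A ⊗ B.X)).hom := by
  dsimp only [gone, gmul]
  calc
    _ = 𝟙 _ ⊗≫ (A ◁ (B.X ◁ ηA)) ⊗≫
          ((A ⊗ B.X ⊗ A : C) ◁ (MonObj.one (X := B.X)) ≫ (A ◁ (bA.β B.X).inv) ▷ B.X) ⊗≫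
          (μA ⊗ₘ (MonObj.mul (X := B.X))) ⊗≫ 𝟙 _ := by
        rw [tensorHom_def ηA (MonObj.one (X := B.X))]; monoidal
    _ = 𝟙 _ ⊗≫ (A ◁ (B.X ◁ ηA ≫ (bA.β B.X).inv)) ⊗≫
          ((A ⊗ A ⊗ B.X : C) ◁ (MonObj.one (X := B.X))) ⊗≫ (μA ⊗ₘ (MonObj.mul (X := B.X))) ⊗≫ 𝟙 _ := by
        rw [whisker_exchange]; monoidal
    _ = 𝟙 _ ⊗≫ A ◁ (ηA ▷ B.X) ⊗≫
          ((A ⊗ A : C) ◁ (B.X ◁ (MonObj.one (X := B.X))) ≫ μA ▷ (B.X ⊗ B.X)) ⊗≫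
          A ◁ (MonObj.mul (X := B.X)) ⊗≫ 𝟙 _ := by
        rw [hη, tensorHom_def μA (MonObj.mul (X := B.X))]; monoidal
    _ = 𝟙 _ ⊗≫ ((A ◁ ηA ≫ μA) ▷ B.X) ⊗≫
          (A ◁ (B.X ◁ (MonObj.one (X := B.X)) ≫ (MonObj.mul (X := B.X)))) ⊗≫ 𝟙 _ := by
        rw [whisker_exchange]; monoidal
    _ = (ρ_ (A ⊗ B.X)).hom := by rw [h2, MonObj.mul_one B.X]; monoidal

set_option maxHeartbeats 1600000 in
lemma p3
    (hmu : ∀ U : C, U ◁ μA ≫ (bA.β U).inv =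
      (α_ U A A).inv ≫ (bA.β U).inv ▷ A ≫ (α_ A U A).hom ≫
        A ◁ (bA.β U).inv ≫ (α_ A A U).inv ≫ μA ▷ U)
    (h3 : μA ▷ A ≫ μA = (α_ A A A).hom ≫ A ◁ μA ≫ μA) :
    (gmul bA B μA ▷ (A ⊗ B.X)) ≫ gmul bA B μA =
      (α_ (A ⊗ B.X) (A ⊗ B.X) (A ⊗ B.X)).hom ≫
        ((A ⊗ B.X) ◁ gmul bA B μA) ≫ gmul bA B μA := by
  have hR : (α_ (A ⊗ B.X) (A ⊗ B.X) (A ⊗ B.X)).hom ≫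
      ((A ⊗ B.X) ◁ gmul bA B μA) ≫ gmul bA B μA =
      𝟙 _ ⊗≫ A ◁ ((bA.β B.X).inv ▷ (B.X ⊗ A ⊗ B.X)) ⊗≫
        (A ⊗ A ⊗ B.X : C) ◁ ((bA.β B.X).inv ▷ B.X) ⊗≫
        (A ⊗ A : C) ◁ ((bA.β B.X).inv ▷ (B.X ⊗ B.X)) ⊗≫
        (A ◁ μA ≫ μA) ▷ (B.X ⊗ B.X ⊗ B.X) ⊗≫
        A ◁ (B.X ◁ (MonObj.mul (X := B.X)) ≫ (MonObj.mul (X := B.X))) ⊗≫ 𝟙 _ := by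
    dsimp only [gmul]
    calc
      _ = 𝟙 _ ⊗≫ ((A ⊗ B.X : C)) ◁ (A ◁ ((bA.β B.X).inv ▷ B.X)) ⊗≫
            ((A ⊗ B.X : C)) ◁ (μA ▷ (B.X ⊗ B.X)) ⊗≫
            A ◁ (((B.X ⊗ A) ◁ (MonObj.mul (X := B.X))) ≫ ((bA.β B.X).inv ▷ B.X)) ⊗≫
            μA ▷ (B.X ⊗ B.X) ⊗≫ A ◁ (MonObj.mul (X := B.X)) ⊗≫ 𝟙 _ := by
          rw [tensorHom_def μA (MonObj.mul (X := B.X))]; monoidal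
      _ = 𝟙 _ ⊗≫ ((A ⊗ B.X : C)) ◁ (A ◁ ((bA.β B.X).inv ▷ B.X)) ⊗≫
            A ◁ ((B.X ◁ μA ≫ (bA.β B.X).inv) ▷ (B.X ⊗ B.X)) ⊗≫
            (A ⊗ A ⊗ B.X : C) ◁ (MonObj.mul (X := B.X)) ⊗≫
            μA ▷ (B.X ⊗ B.X) ⊗≫ A ◁ (MonObj.mul (X := B.X)) ⊗≫ 𝟙 _ := by
          rw [whisker_exchange ((bA.β B.X).inv) (MonObj.mul (X := B.X))]; monoidal
      _ = 𝟙 _ ⊗≫ ((A ⊗ B.X : C)) ◁ (A ◁ ((bA.β B.X).inv ▷ B.X)) ⊗≫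
            A ◁ ((bA.β B.X).inv ▷ (A ⊗ B.X ⊗ B.X)) ⊗≫
            (A ⊗ A : C) ◁ ((bA.β B.X).inv ▷ (B.X ⊗ B.X)) ⊗≫
            A ◁ (μA ▷ (B.X ⊗ B.X ⊗ B.X)) ⊗≫
            (A ⊗ A ⊗ B.X : C) ◁ (MonObj.mul (X := B.X)) ⊗≫
            μA ▷ (B.X ⊗ B.X) ⊗≫ A ◁ (MonObj.mul (X := B.X)) ⊗≫ 𝟙 _ := by
          rw [hmu B.X]; monoidal
      _ = 𝟙 _ ⊗≫ ((A ⊗ B.X ⊗ A : C) ◁ ((bA.β B.X).inv ▷ B.X) ≫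
              (A ◁ (bA.β B.X).inv) ▷ ((A ⊗ B.X) ⊗ B.X)) ⊗≫
            (A ⊗ A : C) ◁ ((bA.β B.X).inv ▷ (B.X ⊗ B.X)) ⊗≫
            A ◁ (μA ▷ (B.X ⊗ B.X ⊗ B.X)) ⊗≫
            (A ⊗ A ⊗ B.X : C) ◁ (MonObj.mul (X := B.X)) ⊗≫
            μA ▷ (B.X ⊗ B.X) ⊗≫ A ◁ (MonObj.mul (X := B.X)) ⊗≫ 𝟙 _ := by monoidal
      _ = 𝟙 _ ⊗≫ A ◁ ((bA.β B.X).inv ▷ (B.X ⊗ A ⊗ B.X)) ⊗≫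
            (A ⊗ A ⊗ B.X : C) ◁ ((bA.β B.X).inv ▷ B.X) ⊗≫
            (A ⊗ A : C) ◁ ((bA.β B.X).inv ▷ (B.X ⊗ B.X)) ⊗≫
            A ◁ (μA ▷ (B.X ⊗ B.X ⊗ B.X)) ⊗≫
            ((A ⊗ A : C) ◁ (B.X ◁ (MonObj.mul (X := B.X))) ≫ μA ▷ (B.X ⊗ B.X)) ⊗≫
            A ◁ (MonObj.mul (X := B.X)) ⊗≫ 𝟙 _ := by
          rw [whisker_exchange]; monoidal
      _ = 𝟙 _ ⊗≫ A ◁ ((bA.β B.X).inv ▷ (B.X ⊗ A ⊗ B.X)) ⊗≫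
            (A ⊗ A ⊗ B.X : C) ◁ ((bA.β B.X).inv ▷ B.X) ⊗≫
            (A ⊗ A : C) ◁ ((bA.β B.X).inv ▷ (B.X ⊗ B.X)) ⊗≫
            (A ◁ μA ≫ μA) ▷ (B.X ⊗ B.X ⊗ B.X) ⊗≫
            A ◁ (B.X ◁ (MonObj.mul (X := B.X)) ≫ (MonObj.mul (X := B.X))) ⊗≫ 𝟙 _ := by
          rw [whisker_exchange]; monoidal
  dsimp only [gmul]
  calc
    _ = 𝟙 _ ⊗≫ A ◁ ((bA.β B.X).inv ▷ (B.X ⊗ A ⊗ B.X)) ⊗≫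
          μA ▷ ((B.X ⊗ B.X) ⊗ A ⊗ B.X) ⊗≫
          A ◁ (((MonObj.mul (X := B.X)) ▷ A ≫ (bA.β B.X).inv) ▷ B.X) ⊗≫
          μA ▷ (B.X ⊗ B.X) ⊗≫ A ◁ (MonObj.mul (X := B.X)) ⊗≫ 𝟙 _ := by
        rw [tensorHom_def μA (MonObj.mul (X := B.X))]; monoidal
    _ = 𝟙 _ ⊗≫ A ◁ ((bA.β B.X).inv ▷ (B.X ⊗ A ⊗ B.X)) ⊗≫
          (μA ▷ (((B.X ⊗ B.X) ⊗ A) ⊗ B.X) ≫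
            A ◁ ((bA.β (B.X ⊗ B.X)).inv ▷ B.X)) ⊗≫
          A ◁ ((A ◁ (MonObj.mul (X := B.X))) ▷ B.X) ⊗≫
          μA ▷ (B.X ⊗ B.X) ⊗≫ A ◁ (MonObj.mul (X := B.X)) ⊗≫ 𝟙 _ := by
        rw [inv_nat bA (MonObj.mul (X := B.X))]; monoidal
    _ = 𝟙 _ ⊗≫ A ◁ ((bA.β B.X).inv ▷ (B.X ⊗ A ⊗ B.X)) ⊗≫
          (A ⊗ A : C) ◁ ((bA.β (B.X ⊗ B.X)).inv ▷ B.X) ⊗≫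
          μA ▷ ((A ⊗ (B.X ⊗ B.X)) ⊗ B.X) ⊗≫
          ((A ⊗ A : C) ◁ ((MonObj.mul (X := B.X)) ▷ B.X) ≫ μA ▷ (B.X ⊗ B.X)) ⊗≫
          A ◁ (MonObj.mul (X := B.X)) ⊗≫ 𝟙 _ := by
        rw [← whisker_exchange μA ((bA.β (B.X ⊗ B.X)).inv ▷ B.X)]; monoidal
    _ = 𝟙 _ ⊗≫ A ◁ ((bA.β B.X).inv ▷ (B.X ⊗ A ⊗ B.X)) ⊗≫
          (A ⊗ A : C) ◁ ((bA.β (B.X ⊗ B.X)).inv ▷ B.X) ⊗≫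
          (μA ▷ A ≫ μA) ▷ ((B.X ⊗ B.X) ⊗ B.X) ⊗≫
          A ◁ ((MonObj.mul (X := B.X)) ▷ B.X ≫ (MonObj.mul (X := B.X))) ⊗≫ 𝟙 _ := by
        rw [whisker_exchange]; monoidal
    _ = 𝟙 _ ⊗≫ A ◁ ((bA.β B.X).inv ▷ (B.X ⊗ A ⊗ B.X)) ⊗≫
          (A ⊗ A ⊗ B.X : C) ◁ ((bA.β B.X).inv ▷ B.X) ⊗≫
          (A ⊗ A : C) ◁ ((bA.β B.X).inv ▷ (B.X ⊗ B.X)) ⊗≫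
          (μA ▷ A ≫ μA) ▷ (B.X ⊗ B.X ⊗ B.X) ⊗≫
          A ◁ ((MonObj.mul (X := B.X)) ▷ B.X ≫ (MonObj.mul (X := B.X))) ⊗≫ 𝟙 _ := by
        rw [inv_monoidal bA]; monoidal
    _ = 𝟙 _ ⊗≫ A ◁ ((bA.β B.X).inv ▷ (B.X ⊗ A ⊗ B.X)) ⊗≫
          (A ⊗ A ⊗ B.X : C) ◁ ((bA.β B.X).inv ▷ B.X) ⊗≫
          (A ⊗ A : C) ◁ ((bA.β B.X).inv ▷ (B.X ⊗ B.X)) ⊗≫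
          (A ◁ μA ≫ μA) ▷ (B.X ⊗ B.X ⊗ B.X) ⊗≫
          A ◁ (B.X ◁ (MonObj.mul (X := B.X)) ≫ (MonObj.mul (X := B.X))) ⊗≫ 𝟙 _ := by
        rw [h3, MonObj.mul_assoc B.X]; monoidal
    _ = _ := hR.symm

end
end BTAux

lemma center_one_comm_inv_aux {A : C} (bA : HalfBraiding A) (U : C) (f : 𝟙_ C ⟶ A)
    (h : f ▷ U ≫ (bA.β U).hom = (λ_ U ≪≫ (ρ_ U).symm).hom ≫ U ◁ f) :
    U ◁ f ≫ (bA.β U).inv = (ρ_ U).hom ≫ (λ_ U).inv ≫ f ▷ U := by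
  rw [Iso.comp_inv_eq]; simp [h]
lemma center_mul_comm_inv_aux {A : C} (bA : HalfBraiding A) (U : C) (f : A ⊗ A ⟶ A)
    (h : f ▷ U ≫ (bA.β U).hom = (α_ A A U ≪≫ A ◁ᵢ bA.β U ≪≫ (α_ A U A).symm ≪≫
      bA.β U ▷ᵢ A ≪≫ α_ U A A).hom ≫ U ◁ f) :
    U ◁ f ≫ (bA.β U).inv =
      (α_ U A A).inv ≫ (bA.β U).inv ▷ A ≫ (α_ A U A).hom ≫
        A ◁ (bA.β U).inv ≫ (α_ A A U).inv ≫ f ▷ U := by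
  rw [Iso.comp_inv_eq]; simp [h]
lemma center_one_comm_inv (M : Mon (Center C)) (U : C) :
    U ◁ (MonObj.one (X := M.X)).f ≫ (M.X.2.β U).inv = (ρ_ U).hom ≫ (λ_ U).inv ≫ (MonObj.one (X := M.X)).f ▷ U :=
  center_one_comm_inv_aux M.X.2 U _
    (by have h := (MonObj.one (X := M.X)).comm U; simp only [Center.tensorUnit_β] at h; exact h)
lemma center_mul_comm_inv (M : Mon (Center C)) (U : C) :
    U ◁ (MonObj.mul (X := M.X)).f ≫ (M.X.2.β U).inv =
      (α_ U M.X.1 M.X.1).inv ≫ (M.X.2.β U).inv ▷ M.X.1 ≫ (α_ M.X.1 U M.X.1).hom ≫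
        M.X.1 ◁ (M.X.2.β U).inv ≫ (α_ M.X.1 M.X.1 U).inv ≫ (MonObj.mul (X := M.X)).f ▷ U :=
  center_mul_comm_inv_aux M.X.2 U _
    (by have h := (MonObj.mul (X := M.X)).comm U; simp only [Center.tensor_β] at h; exact h)


/-- The multiplication on `A ⊗ B`, where `(A, β)` is a monoid object in the Drinfeld center
`Z(C)` and `B` is a monoid object in `C`: up to the associativity isomorphisms of `C` it is
`(μ_A ⊗ μ_B) ∘ (id_A ⊗ (β_B)⁻¹ ⊗ id_B)`, where `β_B : A ⊗ B ≅ B ⊗ A` is the half-braiding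
of `A` at `B`. -/
def braidedTensorMul (M : Mon (Center C)) (B : Mon C) :
    (M.X.1 ⊗ B.X) ⊗ (M.X.1 ⊗ B.X) ⟶ M.X.1 ⊗ B.X :=
  (α_ M.X.1 B.X (M.X.1 ⊗ B.X)).hom ≫
    (M.X.1 ◁ (α_ B.X M.X.1 B.X).inv) ≫
    (M.X.1 ◁ ((M.X.2.β B.X).inv ▷ B.X)) ≫
    (M.X.1 ◁ (α_ M.X.1 B.X B.X).hom) ≫
    (α_ M.X.1 M.X.1 (B.X ⊗ B.X)).inv ≫
    ((MonObj.mul (X := M.X)).f ⊗ₘ MonObj.mul (X := B.X))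

/-- The unit of `A ⊗ B`: up to a unitor of `C` it is `η_A ⊗ η_B`. -/
def braidedTensorOne (M : Mon (Center C)) (B : Mon C) : 𝟙_ C ⟶ M.X.1 ⊗ B.X :=
  (λ_ (𝟙_ C)).inv ≫ ((MonObj.one (X := M.X)).f ⊗ₘ MonObj.one (X := B.X))

/-- If `(A, β)` is a monoid object in the Drinfeld center `Z(C)` of a monoidal
category `C` and `B` is a monoid object in `C`, then `A ⊗ B` with the multiplication
`(μ_A ⊗ μ_B) ∘ (id_A ⊗ (β_B)⁻¹ ⊗ id_B)` (up to associators) and unit `η_A ⊗ η_B` (up to a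
unitor) is a monoid object in `C`: the unit axioms and associativity hold. -/
theorem braidedTensor_isMonoid (M : Mon (Center C)) (B : Mon C) :
    ((braidedTensorOne M B ▷ (M.X.1 ⊗ B.X)) ≫ braidedTensorMul M B
        = (λ_ (M.X.1 ⊗ B.X)).hom) ∧
    (((M.X.1 ⊗ B.X) ◁ braidedTensorOne M B) ≫ braidedTensorMul M B
        = (ρ_ (M.X.1 ⊗ B.X)).hom) ∧
    ((braidedTensorMul M B ▷ (M.X.1 ⊗ B.X)) ≫ braidedTensorMul M B
        = (α_ (M.X.1 ⊗ B.X) (M.X.1 ⊗ B.X) (M.X.1 ⊗ B.X)).hom ≫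
            ((M.X.1 ⊗ B.X) ◁ braidedTensorMul M B) ≫ braidedTensorMul M B) := by
  refine ⟨?_, ?_, ?_⟩
  · exact BTAux.p1 M.X.2 B (MonObj.one (X := M.X)).f (MonObj.mul (X := M.X)).f (congrArg Center.Hom.f (MonObj.one_mul M.X))
  · exact BTAux.p2 M.X.2 B (MonObj.one (X := M.X)).f (MonObj.mul (X := M.X)).f (center_one_comm_inv M)
      (congrArg Center.Hom.f (MonObj.mul_one M.X))
  · exact BTAux.p3 M.X.2 B (MonObj.mul (X := M.X)).f (center_mul_comm_inv M)
      (congrArg Center.Hom.f (MonObj.mul_assoc M.X))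

end
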